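/- Let E be a real normed vector space, L : E ≃L[ℝ] E a continuous linear equivalence, p and q real numbers, N : E → E positively homogeneous of degree p and Fréchet differentiable at u*, and s : E → ℝ positively homogeneous of degree q and Fréchet differentiable at u*. Suppose L u* = N(u*) and s(u*) = 1, and let F(x) = s(x) • L⁻¹(N(x)). Then F is differentiable at u* and (fderiv F u*)(u*) = (p + q) • u*; that is, the stabilizing factor transforms the eigenvalue p of the classical fixed-point iteration matrix into the eigenvalue p + q of the Petviashvili-type iteration matrix, with the same eigenvector u*. -/

import Mathlib

/-- Euler's identity for positively homogeneous maps. -/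
lemma euler_identity
    {E F : Type*} [NormedAddCommGroup E] [NormedSpace ℝ E]
    [NormedAddCommGroup F] [NormedSpace ℝ F]
    (N : E → F) (p : ℝ)
    (hN : ∀ t : ℝ, 0 < t → ∀ x : E, N (t • x) = t ^ p • N x)
    (u : E) (hd : DifferentiableAt ℝ N u) :
    fderiv ℝ N u u = p • N u := by
  have hg : HasDerivAt (fun t : ℝ => t • u) u 1 := by
    simpa using (hasDerivAt_id (1 : ℝ)).smul_const u
  have h1 : HasDerivAt (fun t : ℝ => N (t • u)) (fderiv ℝ N u u) 1 := by
    have hd' : HasFDerivAt N (fderiv ℝ N u) ((1:ℝ) • u) := by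
      simpa using hd.hasFDerivAt
    have := hd'.comp_hasDerivAt (x := 1) hg
    exact this
  have hr : HasDerivAt (fun t : ℝ => t ^ p) p 1 := by
    simpa using Real.hasDerivAt_rpow_const (p := p) (x := (1 : ℝ)) (Or.inl one_ne_zero)
  have h2 : HasDerivAt (fun t : ℝ => t ^ p • N u) (p • N u) 1 := hr.smul_const (N u)
  have heq : (fun t : ℝ => N (t • u)) =ᶠ[nhds (1 : ℝ)] fun t : ℝ => t ^ p • N u := by
    filter_upwards [Ioi_mem_nhds (zero_lt_one)] with t ht
    exact hN t ht u
  exact h1.unique (h2.congr_of_eventuallyEq heq)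

/-- The stabilizing factor transforms the eigenvalue `p` of the classical fixed-point
iteration matrix into the eigenvalue `p + q` of the Petviashvili-type iteration matrix,
with the same eigenvector `u*`: `(fderiv F u*) u* = (p + q) • u*`. -/
theorem petviashvili_eigenvalue_shift
    {E : Type*} [NormedAddCommGroup E] [NormedSpace ℝ E]
    (L : E ≃L[ℝ] E) (p q : ℝ) (N : E → E) (s : E → ℝ)
    (hN : ∀ t : ℝ, 0 < t → ∀ x : E, N (t • x) = t ^ p • N x)
    (hs : ∀ t : ℝ, 0 < t → ∀ x : E, s (t • x) = t ^ q * s x)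
    (ustar : E)
    (hNdiff : DifferentiableAt ℝ N ustar)
    (hsdiff : DifferentiableAt ℝ s ustar)
    (hsol : L ustar = N ustar) (hs1 : s ustar = 1) :
    DifferentiableAt ℝ (fun x => s x • L.symm (N x)) ustar ∧
    fderiv ℝ (fun x => s x • L.symm (N x)) ustar ustar = (p + q) • ustar := by
  have hNe : fderiv ℝ N ustar ustar = p • N ustar := euler_identity N p hN ustar hNdiff
  have hse : fderiv ℝ s ustar ustar = q * s ustar := by
    have hs' : ∀ t : ℝ, 0 < t → ∀ x : E, s (t • x) = t ^ q • s x := by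
      simpa [smul_eq_mul] using hs
    simpa [smul_eq_mul] using euler_identity s q hs' ustar hsdiff
  set g : E → E := fun x => L.symm (N x) with hgdef
  have hgd : HasFDerivAt g ((L.symm : E →L[ℝ] E).comp (fderiv ℝ N ustar)) ustar :=
    (L.symm : E →L[ℝ] E).hasFDerivAt.comp ustar hNdiff.hasFDerivAt
  have hgdiff : DifferentiableAt ℝ g ustar := hgd.differentiableAt
  have hdiff : DifferentiableAt ℝ (fun x => s x • g x) ustar := hsdiff.smul hgdiff
  refine ⟨hdiff, ?_⟩
  have hF : fderiv ℝ (fun x => s x • g x) ustar =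
      s ustar • fderiv ℝ g ustar + (fderiv ℝ s ustar).smulRight (g ustar) :=
    fderiv_smul hsdiff hgdiff
  have hgu : g ustar = ustar := by
    simp [hgdef, ← hsol]
  have hgfd : fderiv ℝ g ustar ustar = p • ustar := by
    rw [hgd.fderiv]
    simp [hNe, ← hsol]
  rw [hF]
  simp [hgfd, hgu, hse, hs1, add_smul]
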